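/- Second-order kernel expansion lemma: let g, f : ℝ → ℝ be three times continuously differentiable with g, f and their first three derivatives bounded. Then for each a ∈ ℝ, as h → 0⁺, ∫ k(u) (g(a+uh) − g(a)) f(a+uh) du = h² κ₂ ( g'(a) f'(a) + (1/2) g''(a) f(a) ) + O(h³). -/

import Mathlib

open MeasureTheory Filter Real Set Asymptotics

lemma iterWithin_eq {f : ℝ → ℝ} (hf : ContDiff ℝ 3 f)
    {s : Set ℝ} (hs : UniqueDiffOn ℝ s) {x : ℝ} (hx : x ∈ s) {m : ℕ} (hm : (m : WithTop ℕ∞) ≤ 3) :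
    iteratedDerivWithin m f s x = iteratedDeriv m f x := by
  rw [iteratedDerivWithin_eq_iteratedFDerivWithin, iteratedDeriv_eq_iteratedFDeriv]
  have H := ((hf.contDiffOn (s := Set.univ)).ftaylorSeriesWithin uniqueDiffOn_univ).mono
    (Set.subset_univ s)
  have h2 := H.eq_iteratedFDerivWithin_of_uniqueDiffOn hm hs hx
  rw [← h2]
  simp [ftaylorSeriesWithin, iteratedFDerivWithin_univ]

lemma taylor_bound3_right {φ : ℝ → ℝ} (hφ : ContDiff ℝ 3 φ) {M : ℝ}
    (hM : ∀ x, |iteratedDeriv 3 φ x| ≤ M) {a x : ℝ} (hax : a < x) :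
    |φ x - φ a - deriv φ a * (x - a) - iteratedDeriv 2 φ a / 2 * (x - a) ^ 2|
      ≤ M / 2 * |x - a| ^ 3 := by
  have hu : UniqueDiffOn ℝ (Icc a x) := uniqueDiffOn_Icc hax
  have ha : a ∈ Icc a x := left_mem_Icc.mpr hax.le
  have key := taylor_mean_remainder_bound (n := 2) (f := φ) (C := M) hax.le
    (hφ.contDiffOn.of_le (by norm_num)) (right_mem_Icc.mpr hax.le)
    (fun y hy => by
      rw [iterWithin_eq hφ hu hy (by norm_num), Real.norm_eq_abs]
      exact hM y)
  rw [taylor_within_apply] at key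
  rw [Finset.sum_range_succ, Finset.sum_range_succ, Finset.sum_range_one] at key
  rw [iterWithin_eq hφ hu ha (by norm_num), iterWithin_eq hφ hu ha (by norm_num),
    iterWithin_eq hφ hu ha (by norm_num)] at key
  simp only [iteratedDeriv_zero, iteratedDeriv_one, smul_eq_mul, Real.norm_eq_abs] at key
  norm_num [Nat.factorial] at key
  have hxa : |x - a| = x - a := abs_of_pos (by linarith)
  have e : φ x - φ a - deriv φ a * (x - a) - iteratedDeriv 2 φ a / 2 * (x - a) ^ 2
      = φ x - (φ a + (x - a) * deriv φ a + 1 / 2 * (x - a) ^ 2 * iteratedDeriv 2 φ a) := by ring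
  rw [e, hxa]
  linarith [key]

lemma taylor_bound3 {φ : ℝ → ℝ} (hφ : ContDiff ℝ 3 φ) {M : ℝ}
    (hM : ∀ x, |iteratedDeriv 3 φ x| ≤ M) (a x : ℝ) :
    |φ x - φ a - deriv φ a * (x - a) - iteratedDeriv 2 φ a / 2 * (x - a) ^ 2|
      ≤ M / 2 * |x - a| ^ 3 := by
  rcases lt_trichotomy a x with hax | rfl | hxa
  · exact taylor_bound3_right hφ hM hax
  · simp
  · set ψ : ℝ → ℝ := fun t => φ (2 * a - t) with hψdef
    have hψ : ContDiff ℝ 3 ψ := hφ.comp (contDiff_const.sub contDiff_id)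
    have hiter : ∀ (n : ℕ) (y : ℝ),
        iteratedDeriv n ψ y = (-1 : ℝ) ^ n * iteratedDeriv n φ (2 * a - y) := by
      intro n y
      have e : ψ = fun x => (fun s => φ (s + 2 * a)) (-x) := by
        funext t; show φ (2 * a - t) = φ (-t + 2 * a); congr 1; ring
      have key : iteratedDeriv n ψ y
          = (-1 : ℝ) ^ n • iteratedDeriv n (fun s => φ (s + 2 * a)) (-y) := by
        rw [e]; exact iteratedDeriv_comp_neg n (fun s => φ (s + 2 * a)) y
      have key2 := congrFun (iteratedDeriv_comp_add_const n φ (2 * a)) (-y)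
      rw [key, key2, smul_eq_mul, show -y + 2 * a = 2 * a - y from by ring]
    have ea : 2 * a - a = a := by ring
    have hMψ : ∀ y, |iteratedDeriv 3 ψ y| ≤ M := by
      intro y
      rw [hiter, abs_mul]
      calc |(-1:ℝ)^3| * |iteratedDeriv 3 φ (2*a - y)| = |iteratedDeriv 3 φ (2*a-y)| := by
            norm_num
        _ ≤ M := hM _
    have h2 := taylor_bound3_right hψ hMψ (a := a) (x := 2 * a - x) (by linarith)
    have e0 : ψ a = φ a := by show φ (2*a - a) = φ a; rw [ea]
    have ex : ψ (2 * a - x) = φ x := by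
      show φ (2*a - (2*a - x)) = φ x; congr 1; ring
    have e1 : deriv ψ a = -deriv φ a := by
      have := hiter 1 a; rw [ea] at this; simpa [iteratedDeriv_one] using this
    have e2 : iteratedDeriv 2 ψ a = iteratedDeriv 2 φ a := by
      have := hiter 2 a; rw [ea] at this; simpa using this
    rw [e0, ex, e1, e2] at h2
    have eabs : |2 * a - x - a| = |x - a| := by rw [abs_sub_comm]; congr 1; ring
    rw [eabs] at h2
    have e3 : φ x - φ a - -deriv φ a * (2 * a - x - a) - iteratedDeriv 2 φ a / 2 * (2 * a - x - a) ^ 2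
        = φ x - φ a - deriv φ a * (x - a) - iteratedDeriv 2 φ a / 2 * (x - a) ^ 2 := by ring
    rw [e3] at h2
    exact h2

lemma iter_sub_const (g : ℝ → ℝ) (c : ℝ) (n : ℕ) :
    iteratedDeriv (n+1) (fun x => g x - c) = iteratedDeriv (n+1) g := by
  rw [iteratedDeriv_succ', iteratedDeriv_succ',
    show (deriv fun x => g x - c) = deriv g from funext fun y => deriv_sub_const c]

lemma prod_third_deriv_bound {g f : ℝ → ℝ} (hg : ContDiff ℝ 3 g) (hf : ContDiff ℝ 3 f)
    {Cg Cf : ℝ}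
    (hCg : ∀ x, |g x| ≤ Cg ∧ |deriv g x| ≤ Cg ∧ |iteratedDeriv 2 g x| ≤ Cg ∧
      |iteratedDeriv 3 g x| ≤ Cg)
    (hCf : ∀ x, |f x| ≤ Cf ∧ |deriv f x| ≤ Cf ∧ |iteratedDeriv 2 f x| ≤ Cf ∧
      |iteratedDeriv 3 f x| ≤ Cf)
    (a x : ℝ) :
    |iteratedDeriv 3 (fun y => (g y - g a) * f y) x| ≤ 16 * Cg * Cf := by
  have hCg0 : 0 ≤ Cg := le_trans (abs_nonneg _) (hCg 0).1
  have hCf0 : 0 ≤ Cf := le_trans (abs_nonneg _) (hCf 0).1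
  have hgs : ContDiff ℝ 3 (fun y => g y - g a) := hg.sub contDiff_const
  have kg : ∀ i, i ≤ 3 → ‖iteratedFDeriv ℝ i (fun y => g y - g a) x‖ ≤ 2 * Cg := by
    intro i hi
    rw [norm_iteratedFDeriv_eq_norm_iteratedDeriv, Real.norm_eq_abs]
    interval_cases i
    · simp only [iteratedDeriv_zero]
      have h1 : |g x - g a| ≤ |g x| + |g a| := by
        simpa [sub_eq_add_neg] using abs_add_le (g x) (-(g a))
      linarith [(hCg x).1, (hCg a).1]
    · rw [iteratedDeriv_one, deriv_sub_const]
      linarith [(hCg x).2.1]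
    · rw [show iteratedDeriv 2 (fun y => g y - g a) x = iteratedDeriv 2 g x from
        congrFun (iter_sub_const g (g a) 1) x]
      linarith [(hCg x).2.2.1]
    · rw [show iteratedDeriv 3 (fun y => g y - g a) x = iteratedDeriv 3 g x from
        congrFun (iter_sub_const g (g a) 2) x]
      linarith [(hCg x).2.2.2]
  have kf : ∀ j, j ≤ 3 → ‖iteratedFDeriv ℝ j f x‖ ≤ Cf := by
    intro j hj
    rw [norm_iteratedFDeriv_eq_norm_iteratedDeriv, Real.norm_eq_abs]
    interval_cases j
    · simpa using (hCf x).1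
    · rw [iteratedDeriv_one]; exact (hCf x).2.1
    · exact (hCf x).2.2.1
    · exact (hCf x).2.2.2
  rw [← Real.norm_eq_abs, ← norm_iteratedFDeriv_eq_norm_iteratedDeriv]
  refine (norm_iteratedFDeriv_mul_le hgs hf x (by norm_num)).trans ?_
  calc ∑ i ∈ Finset.range (3 + 1), ((3 : ℕ).choose i : ℝ) *
        ‖iteratedFDeriv ℝ i (fun y => g y - g a) x‖ * ‖iteratedFDeriv ℝ (3 - i) f x‖
      ≤ ∑ i ∈ Finset.range (3 + 1), ((3 : ℕ).choose i : ℝ) * (2 * Cg) * Cf := by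
        refine Finset.sum_le_sum fun i hi => ?_
        have hi3 : i ≤ 3 := by have := Finset.mem_range.mp hi; omega
        have h3i : 3 - i ≤ 3 := by omega
        exact mul_le_mul (mul_le_mul le_rfl (kg i hi3) (norm_nonneg _) (Nat.cast_nonneg _))
          (kf _ h3i) (norm_nonneg _) (by positivity)
    _ = 16 * Cg * Cf := by
        rw [Finset.sum_range_succ, Finset.sum_range_succ, Finset.sum_range_succ,
          Finset.sum_range_one]
        norm_num [Nat.choose]
        ring

/-- **Second-order kernel expansion lemma.**
`k : ℝ → ℝ` is a nonnegative bounded (integrable) kernel with `∫ k = 1`, `∫ u k(u) du = 0`,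
`0 < κ₂ := ∫ u² k(u) du < ∞` and `∫ |u|³ k(u) du < ∞`.
If `g, f : ℝ → ℝ` are three times continuously differentiable with `g`, `f` and their first
three derivatives bounded, then for each `a ∈ ℝ`, as `h → 0⁺`,
`∫ k(u) (g(a+uh) − g(a)) f(a+uh) du = h² κ₂ (g'(a) f'(a) + (1/2) g''(a) f(a)) + O(h³)`. -/
theorem second_order_kernel_expansion
    (k : ℝ → ℝ) (hk_nonneg : ∀ u, 0 ≤ k u) (hk_bdd : ∃ C, ∀ u, k u ≤ C)
    (hk_int : Integrable k) (hk_one : (∫ u, k u) = 1)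
    (hk_mean_int : Integrable (fun u => u * k u)) (hk_mean : (∫ u, u * k u) = 0)
    (κ2 : ℝ) (hκ2_int : Integrable (fun u => u ^ 2 * k u))
    (hκ2_def : κ2 = ∫ u, u ^ 2 * k u) (hκ2_pos : 0 < κ2)
    (hk3_int : Integrable (fun u => |u| ^ 3 * k u))
    (g f : ℝ → ℝ) (hg : ContDiff ℝ 3 g) (hf : ContDiff ℝ 3 f)
    (hgb : ∃ C, ∀ x, |g x| ≤ C ∧ |deriv g x| ≤ C ∧ |iteratedDeriv 2 g x| ≤ C ∧
      |iteratedDeriv 3 g x| ≤ C)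
    (hfb : ∃ C, ∀ x, |f x| ≤ C ∧ |deriv f x| ≤ C ∧ |iteratedDeriv 2 f x| ≤ C ∧
      |iteratedDeriv 3 f x| ≤ C)
    (a : ℝ) :
    (fun h : ℝ =>
        (∫ u, k u * (g (a + u * h) - g a) * f (a + u * h)) -
          h ^ 2 * κ2 * (deriv g a * deriv f a + (1 / 2) * iteratedDeriv 2 g a * f a))
      =O[nhdsWithin 0 (Set.Ioi 0)] (fun h : ℝ => h ^ 3) := by
  
  obtain ⟨Cg, hCg⟩ := hgb
  obtain ⟨Cf, hCf⟩ := hfb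
  have hCg0 : 0 ≤ Cg := le_trans (abs_nonneg _) (hCg 0).1
  have hCf0 : 0 ≤ Cf := le_trans (abs_nonneg _) (hCf 0).1
  set φ : ℝ → ℝ := fun x => (g x - g a) * f x with hφdef
  have hφ3 : ContDiff ℝ 3 φ := (hg.sub contDiff_const).mul hf
  set M : ℝ := 16 * Cg * Cf with hMdef
  have hMφ : ∀ x, |iteratedDeriv 3 φ x| ≤ M :=
    fun x => prod_third_deriv_bound hg hf hCg hCf a x
  have hgd : Differentiable ℝ g := hg.differentiable (by norm_num)
  have hfd : Differentiable ℝ f := hf.differentiable (by norm_num)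
  have hg2 : ContDiff ℝ 2 (deriv g) := by
    have h : ContDiff ℝ ((2 : WithTop ℕ∞) + 1) g := by norm_num; exact hg
    exact (contDiff_succ_iff_deriv.mp h).2.2
  have hf2 : ContDiff ℝ 2 (deriv f) := by
    have h : ContDiff ℝ ((2 : WithTop ℕ∞) + 1) f := by norm_num; exact hf
    exact (contDiff_succ_iff_deriv.mp h).2.2
  have hφa : φ a = 0 := by simp [hφdef]
  have hdφ : deriv φ = fun x => deriv g x * f x + (g x - g a) * deriv f x := by
    funext x
    exact (((hgd x).hasDerivAt.sub_const (g a)).mul (hfd x).hasDerivAt).deriv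
  have hdφa : deriv φ a = deriv g a * f a := by rw [hdφ]; simp
  have hφ2a : iteratedDeriv 2 φ a = iteratedDeriv 2 g a * f a + 2 * (deriv g a * deriv f a) := by
    have h0 : iteratedDeriv 2 φ a = deriv (deriv φ) a := by
      rw [iteratedDeriv_succ, iteratedDeriv_one]
    rw [h0, hdφ]
    have H1 : HasDerivAt (fun x => deriv g x * f x)
        (deriv (deriv g) a * f a + deriv g a * deriv f a) a :=
      ((hg2.differentiable (by norm_num) a).hasDerivAt).mul (hfd a).hasDerivAt
    have H2 : HasDerivAt (fun x => (g x - g a) * deriv f x)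
        (deriv g a * deriv f a + (g a - g a) * deriv (deriv f) a) a :=
      (((hgd a).hasDerivAt.sub_const (g a)).mul (hf2.differentiable (by norm_num) a).hasDerivAt)
    rw [show (fun x => deriv g x * f x + (g x - g a) * deriv f x) = ((fun x => deriv g x * f x) + fun x => (g x - g a) * deriv f x) from rfl, (H1.add H2).deriv]
    have e2 : deriv (deriv g) a = iteratedDeriv 2 g a := by
      rw [iteratedDeriv_succ, iteratedDeriv_one]
    rw [e2, sub_self, zero_mul, add_zero]; ring
  have taylor : ∀ t : ℝ,
      |φ (a + t) - (deriv φ a * t + iteratedDeriv 2 φ a / 2 * t ^ 2)| ≤ M / 2 * |t| ^ 3 := by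
    intro t
    have H := taylor_bound3 hφ3 hMφ a (a + t)
    rw [show a + t - a = t from by ring] at H
    have e : φ (a + t) - φ a - deriv φ a * t - iteratedDeriv 2 φ a / 2 * t ^ 2
        = φ (a + t) - (deriv φ a * t + iteratedDeriv 2 φ a / 2 * t ^ 2) := by
      rw [hφa]; ring
    rw [e] at H
    exact H
  have main : ∀ h : ℝ, 0 < h →
      |(∫ u, k u * (g (a + u * h) - g a) * f (a + u * h)) -
        h ^ 2 * κ2 * (deriv g a * deriv f a + (1 / 2) * iteratedDeriv 2 g a * f a)|
      ≤ (M / 2 * ∫ u, |u| ^ 3 * k u) * h ^ 3 := by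
    intro h hh
    have hieq : (∫ u, k u * (g (a + u * h) - g a) * f (a + u * h))
        = ∫ u, k u * φ (a + u * h) := by
      congr 1; funext u; show _ = k u * ((g (a + u * h) - g a) * f (a + u * h)); ring
    have hconst : h ^ 2 * κ2 * (deriv g a * deriv f a + (1 / 2) * iteratedDeriv 2 g a * f a)
        = h ^ 2 * κ2 * (iteratedDeriv 2 φ a / 2) := by rw [hφ2a]; ring
    rw [hieq, hconst]
    have contφh : Continuous fun u : ℝ => φ (a + u * h) :=
      hφ3.continuous.comp (by continuity)
    have boundφ : ∀ u : ℝ, ‖φ (a + u * h)‖ ≤ 2 * Cg * Cf := by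
      intro u
      rw [Real.norm_eq_abs]
      show |(g (a + u * h) - g a) * f (a + u * h)| ≤ 2 * Cg * Cf
      rw [abs_mul]
      have h1 : |g (a + u * h) - g a| ≤ 2 * Cg := by
        have := abs_add_le (g (a + u * h)) (-(g a))
        simp only [abs_neg, ← sub_eq_add_neg] at this
        linarith [(hCg (a + u * h)).1, (hCg a).1]
      exact mul_le_mul h1 (hCf (a + u * h)).1 (abs_nonneg _) (by linarith)
    have hA : Integrable (fun u => k u * φ (a + u * h)) := by
      have := hk_int.bdd_mul contφh.aestronglyMeasurable (ae_of_all _ boundφ)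
      simpa [mul_comm] using this
    have eB' : (fun u : ℝ => k u * (deriv φ a * (u * h))) =
        fun u => (deriv φ a * h) * (u * k u) := by funext u; ring
    have hB : Integrable (fun u => k u * (deriv φ a * (u * h))) := by
      rw [eB']; exact hk_mean_int.const_mul _
    have eC' : (fun u : ℝ => k u * (iteratedDeriv 2 φ a / 2 * (u * h) ^ 2)) =
        fun u => (iteratedDeriv 2 φ a / 2 * h ^ 2) * (u ^ 2 * k u) := by funext u; ring
    have hC : Integrable (fun u => k u * (iteratedDeriv 2 φ a / 2 * (u * h) ^ 2)) := by
      rw [eC']; exact hκ2_int.const_mul _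
    have eB : (∫ u, k u * (deriv φ a * (u * h))) = 0 := by
      rw [eB', integral_const_mul, hk_mean, mul_zero]
    have eC : (∫ u, k u * (iteratedDeriv 2 φ a / 2 * (u * h) ^ 2))
        = h ^ 2 * κ2 * (iteratedDeriv 2 φ a / 2) := by
      rw [eC', integral_const_mul, ← hκ2_def]; ring
    have split : (∫ u, k u * φ (a + u * h)) - h ^ 2 * κ2 * (iteratedDeriv 2 φ a / 2)
        = ∫ u, (k u * φ (a + u * h) - k u * (deriv φ a * (u * h))
            - k u * (iteratedDeriv 2 φ a / 2 * (u * h) ^ 2)) := by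
      have h1 := integral_sub (hA.sub hB) hC
      have h2 := integral_sub hA hB
      simp only [Pi.sub_apply] at h1
      rw [h1, h2, eB, eC]; ring
    rw [split]
    have hptw : ∀ u : ℝ, ‖k u * φ (a + u * h) - k u * (deriv φ a * (u * h))
        - k u * (iteratedDeriv 2 φ a / 2 * (u * h) ^ 2)‖
        ≤ (M / 2 * h ^ 3) * (|u| ^ 3 * k u) := by
      intro u
      have e : k u * φ (a + u * h) - k u * (deriv φ a * (u * h))
          - k u * (iteratedDeriv 2 φ a / 2 * (u * h) ^ 2)
          = k u * (φ (a + u * h)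
            - (deriv φ a * (u * h) + iteratedDeriv 2 φ a / 2 * (u * h) ^ 2)) := by ring
      rw [Real.norm_eq_abs, e, abs_mul, abs_of_nonneg (hk_nonneg u)]
      calc k u * |φ (a + u * h)
            - (deriv φ a * (u * h) + iteratedDeriv 2 φ a / 2 * (u * h) ^ 2)|
          ≤ k u * (M / 2 * |u * h| ^ 3) :=
            mul_le_mul_of_nonneg_left (taylor (u * h)) (hk_nonneg u)
        _ = (M / 2 * h ^ 3) * (|u| ^ 3 * k u) := by
            rw [abs_mul, abs_of_pos hh]; ring
    have hdom : Integrable (fun u => (M / 2 * h ^ 3) * (|u| ^ 3 * k u)) := hk3_int.const_mul _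
    have key := norm_integral_le_of_norm_le hdom (ae_of_all _ hptw)
    rw [integral_const_mul, Real.norm_eq_abs] at key
    exact key.trans_eq (by ring)
  rw [Asymptotics.isBigO_iff]
  refine ⟨M / 2 * ∫ u, |u| ^ 3 * k u, ?_⟩
  filter_upwards [self_mem_nhdsWithin] with h hh
  have hh' : (0 : ℝ) < h := hh
  simp only [Real.norm_eq_abs]
  calc |(∫ u, k u * (g (a + u * h) - g a) * f (a + u * h)) -
        h ^ 2 * κ2 * (deriv g a * deriv f a + (1 / 2) * iteratedDeriv 2 g a * f a)|
      ≤ (M / 2 * ∫ u, |u| ^ 3 * k u) * h ^ 3 := main h hh'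
    _ = (M / 2 * ∫ u, |u| ^ 3 * k u) * |h ^ 3| := by
        rw [abs_of_pos (by positivity)]
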